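/- If X_1, ..., X_n are random variables each uniformly distributed on [0,1] (no independence assumed), then E[max{|A| : A ⊆ [n], ∑_{i∈A} X_i ≤ 1}] ≤ √(2n). -/

import Mathlib

open MeasureTheory Set

/-- The Bruss-Robertson maximal function. -/
noncomputable def knapMax {n : ℕ} (x : Fin n → ℝ) (s : ℝ) : ℕ :=
  (Finset.univ.powerset.filter (fun A => ∑ i ∈ A, x i ≤ s)).sup Finset.card

lemma knapMax_eq_sup' {n : ℕ} (x : Fin n → ℝ) (s : ℝ) :
    knapMax x s = (Finset.univ.powerset (α := Fin n)).sup' ⟨∅, by simp⟩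
      (fun A => if ∑ i ∈ A, x i ≤ s then A.card else 0) := by
  apply le_antisymm
  · apply Finset.sup_le
    intro A hA
    simp only [Finset.mem_filter] at hA
    have := Finset.le_sup' (fun A => if ∑ i ∈ A, x i ≤ s then A.card else 0) hA.1
    simpa [hA.2] using this
  · apply Finset.sup'_le
    intro A hA
    by_cases h : ∑ i ∈ A, x i ≤ s
    · simp only [h, if_true]
      exact Finset.le_sup (f := Finset.card) (Finset.mem_filter.2 ⟨hA, h⟩)
    · simp [h]

lemma knapMax_le {n : ℕ} (x : Fin n → ℝ) (s : ℝ) : knapMax x s ≤ n := by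
  apply Finset.sup_le
  intro A _
  simpa using Finset.card_le_univ A

lemma measurable_knapMax {Ω : Type*} [MeasurableSpace Ω] {n : ℕ} (X : Fin n → Ω → ℝ)
    (hX : ∀ i, Measurable (X i)) :
    Measurable (fun ω => knapMax (fun i => X i ω) 1) := by
  simp_rw [knapMax_eq_sup']
  have : (fun ω => (Finset.univ.powerset (α := Fin n)).sup' ⟨∅, by simp⟩
      (fun A => if ∑ i ∈ A, X i ω ≤ 1 then A.card else 0)) =
      (Finset.univ.powerset (α := Fin n)).sup' ⟨∅, by simp⟩
      (fun A ω => if ∑ i ∈ A, X i ω ≤ 1 then A.card else 0) := by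
    ext ω
    erw [Finset.sup'_apply]
  rw [this]
  apply Finset.measurable_sup'
  intro A _
  exact Measurable.ite (measurableSet_le (by measurability) measurable_const)
    measurable_const measurable_const

lemma knapMax_exists {n : ℕ} (x : Fin n → ℝ) : ∃ A : Finset (Fin n),
    A.card = knapMax x 1 ∧ ∑ i ∈ A, x i ≤ 1 := by
  obtain ⟨A, hA, h⟩ := Finset.exists_mem_eq_sup
    (Finset.univ.powerset.filter (fun A : Finset (Fin n) => ∑ i ∈ A, x i ≤ 1))
    ⟨∅, by simp⟩ Finset.card
  simp only [Finset.mem_filter] at hA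
  exact ⟨A, h.symm, hA.2⟩

lemma key_det {n : ℕ} (x : Fin n → ℝ) (hx : ∀ i, x i ∈ Icc (0:ℝ) 1) :
    ∫ t in Icc (0:ℝ) 1,
      max ((knapMax x 1 : ℝ) - ((Finset.univ.filter (fun i => x i ≤ t)).card : ℝ)) 0 ≤ 1 := by
  obtain ⟨A, hAcard, hAsum⟩ := knapMax_exists x
  -- pointwise bound by g t = card of {i ∈ A : t < x i}
  set g : ℝ → ℝ := fun t => ((A.filter (fun i => t < x i)).card : ℝ) with hg
  have hpt : ∀ t : ℝ, max ((knapMax x 1 : ℝ) - ((Finset.univ.filter (fun i => x i ≤ t)).card : ℝ)) 0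
      ≤ g t := by
    intro t
    apply max_le
    · have h1 : (A.filter (fun i => x i ≤ t)).card ≤ (Finset.univ.filter (fun i => x i ≤ t)).card :=
        Finset.card_le_card (Finset.filter_subset_filter _ (Finset.subset_univ A))
    
      have h2 : (A.filter (fun i => x i ≤ t)).card + (A.filter (fun i => ¬ x i ≤ t)).card = A.card :=
        Finset.card_filter_add_card_filter_not _
      have h3 : (A.filter (fun i => ¬ x i ≤ t)) = (A.filter (fun i => t < x i)) := by
        apply Finset.filter_congr; intro i _; simp [not_le]
      rw [← hAcard]
      push_cast [← h2, h3]
      have : ((Finset.filter (fun i => x i ≤ t) A).card : ℝ) ≤ (Finset.univ.filter (fun i => x i ≤ t)).card := by exact_mod_cast h1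
      linarith
    · positivity
  -- g as a sum of indicators
  have hgsum : ∀ t : ℝ, g t = ∑ i ∈ A, (Iio (x i)).indicator (fun _ => (1:ℝ)) t := by
    intro t
    show ((A.filter (fun i => t < x i)).card : ℝ) = _
    rw [Finset.card_filter]
    push_cast
    apply Finset.sum_congr rfl
    intro i _
    by_cases h : t < x i <;> simp [indicator, h, mem_Iio]
  have hind_int : ∀ i : Fin n, Integrable ((Iio (x i)).indicator (fun _ => (1:ℝ)))
      (volume.restrict (Icc (0:ℝ) 1)) := by
    intro i
    apply (integrable_const (1:ℝ)).indicator measurableSet_Iio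
  have hg_int : Integrable g (volume.restrict (Icc (0:ℝ) 1)) := by
    have : g = fun t => ∑ i ∈ A, (Iio (x i)).indicator (fun _ => (1:ℝ)) t := funext hgsum
    rw [this]
    exact integrable_finset_sum _ fun i _ => hind_int i
  have step1 : ∫ t in Icc (0:ℝ) 1,
      max ((knapMax x 1 : ℝ) - ((Finset.univ.filter (fun i => x i ≤ t)).card : ℝ)) 0
      ≤ ∫ t in Icc (0:ℝ) 1, g t := by
    apply integral_mono_of_nonneg
    · exact Filter.Eventually.of_forall fun t => le_max_right _ _
    · exact hg_int
    · exact Filter.Eventually.of_forall hpt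
  have step2 : ∫ t in Icc (0:ℝ) 1, g t = ∑ i ∈ A, x i := by
    simp_rw [hgsum]
    rw [integral_finset_sum _ fun i _ => hind_int i]
    apply Finset.sum_congr rfl
    intro i _
    rw [integral_indicator_const _ measurableSet_Iio]
    rw [Measure.real, Measure.restrict_apply measurableSet_Iio]
    have : Iio (x i) ∩ Icc 0 1 = Ico 0 (x i) := by
      ext t
      simp only [mem_inter_iff, mem_Iio, mem_Icc, mem_Ico]
      constructor
      · rintro ⟨h1, h2, h3⟩; exact ⟨h2, h1⟩
      · rintro ⟨h1, h2⟩; exact ⟨h2, h1, le_trans h2.le (hx i).2⟩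
    rw [this, Real.volume_Ico, smul_eq_mul, mul_one, ENNReal.toReal_ofReal (by linarith [(hx i).1])]
    simp
  linarith [step1, step2 ▸ step1, hAsum, step2]
-- expectation of the counting function
lemma exp_count {Ω : Type*} [MeasurableSpace Ω] (μ : Measure Ω) [IsProbabilityMeasure μ] {n : ℕ}
    (X : Fin n → Ω → ℝ) (hX : ∀ i, Measurable (X i))
    (hlaw : ∀ i, μ.map (X i) = volume.restrict (Icc (0:ℝ) 1))
    {t : ℝ} (ht : t ∈ Icc (0:ℝ) 1) :
    ∫ ω, ((Finset.univ.filter (fun i => X i ω ≤ t)).card : ℝ) ∂μ = n * t := by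
  have hcount : ∀ ω, ((Finset.univ.filter (fun i => X i ω ≤ t)).card : ℝ)
      = ∑ i : Fin n, ({ω | X i ω ≤ t} : Set Ω).indicator (fun _ => (1:ℝ)) ω := by
    intro ω
    rw [Finset.card_filter]
    push_cast
    apply Finset.sum_congr rfl
    intro i _
    by_cases h : X i ω ≤ t <;> simp [indicator, h]
  have hsetmeas : ∀ i : Fin n, MeasurableSet {ω | X i ω ≤ t} :=
    fun i => measurableSet_le (hX i) measurable_const
  have hind_int : ∀ i : Fin n,
      Integrable (({ω | X i ω ≤ t} : Set Ω).indicator (fun _ => (1:ℝ))) μ :=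
    fun i => (integrable_const (1:ℝ)).indicator (hsetmeas i)
  simp_rw [hcount]
  rw [integral_finset_sum _ fun i _ => hind_int i]
  have hone : ∀ i : Fin n,
      ∫ ω, ({ω | X i ω ≤ t} : Set Ω).indicator (fun _ => (1:ℝ)) ω ∂μ = t := by
    intro i
    rw [integral_indicator_const _ (hsetmeas i), smul_eq_mul, mul_one]
    have : {ω | X i ω ≤ t} = X i ⁻¹' (Iic t) := rfl
    rw [this, Measure.real, ← Measure.map_apply (hX i) measurableSet_Iic, hlaw i,
      Measure.restrict_apply measurableSet_Iic]
    have : Iic t ∩ Icc 0 1 = Icc 0 t := by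
      ext u
      simp only [mem_inter_iff, mem_Iic, mem_Icc]
      exact ⟨fun ⟨h1, h2, _⟩ => ⟨h2, h1⟩, fun ⟨h1, h2⟩ => ⟨h2, h1, h2.trans ht.2⟩⟩
    rw [this, Real.volume_Icc, ENNReal.toReal_ofReal (by linarith [ht.1])]
    ring
  rw [Finset.sum_congr rfl fun i _ => hone i]
  simp [mul_comm]

theorem bruss_robertson_uniform {Ω : Type*} [MeasurableSpace Ω] (μ : Measure Ω)
    [IsProbabilityMeasure μ] (n : ℕ) (X : Fin n → Ω → ℝ)
    (hX : ∀ i, Measurable (X i))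
    (hlaw : ∀ i, μ.map (X i) = volume.restrict (Icc (0:ℝ) 1)) :
    ∫ ω, (knapMax (fun i => X i ω) 1 : ℝ) ∂μ ≤ Real.sqrt (2 * n) := by
  set ν := volume.restrict (Icc (0:ℝ) 1) with hν
  haveI : IsFiniteMeasure ν := ⟨by rw [hν, Measure.restrict_apply_univ, Real.volume_Icc]; norm_num⟩
  set f : Ω → ℕ := fun ω => knapMax (fun i => X i ω) 1 with hfdef
  have hfmeas : Measurable f := measurable_knapMax X hX
  have hfR : Measurable fun ω => (f ω : ℝ) := measurable_from_top.comp hfmeas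
  have hfle : ∀ ω, (f ω : ℝ) ≤ n := fun ω => by exact_mod_cast knapMax_le _ _
  have hf0 : ∀ ω, (0:ℝ) ≤ f ω := fun ω => by positivity
  have hf_int : Integrable (fun ω => (f ω : ℝ)) μ := by
    apply Integrable.mono' (integrable_const (n:ℝ)) hfR.aestronglyMeasurable
    exact Filter.Eventually.of_forall fun ω => by
      rw [Real.norm_eq_abs, abs_of_nonneg (hf0 ω)]; exact hfle ω
  set m := ∫ ω, (f ω : ℝ) ∂μ with hm
  have hm0 : 0 ≤ m := integral_nonneg hf0
  have hmn : m ≤ n := by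
    calc m ≤ ∫ _ω, (n:ℝ) ∂μ := integral_mono hf_int (integrable_const _) hfle
    _ = n := by simp
  rcases Nat.eq_zero_or_pos n with hn | hn
  · have : m ≤ 0 := by simpa [hn] using hmn
    calc ∫ ω, (knapMax (fun i => X i ω) 1 : ℝ) ∂μ = m := rfl
    _ ≤ 0 := this
    _ ≤ Real.sqrt (2 * n) := Real.sqrt_nonneg _
  have hnpos : (0:ℝ) < n := by exact_mod_cast hn
  -- counting function as a function on the product
  set N : Ω → ℝ → ℝ := fun ω t => ((Finset.univ.filter (fun i => X i ω ≤ t)).card : ℝ)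
    with hNdef
  have hNmeas : Measurable (fun p : Ω × ℝ => N p.1 p.2) := by
    have he : (fun p : Ω × ℝ => N p.1 p.2)
        = fun p => ∑ i : Fin n, if X i p.1 ≤ p.2 then (1:ℝ) else 0 := by
      funext p
      rw [hNdef]
      simp only
      rw [Finset.card_filter]
      push_cast
      apply Finset.sum_congr rfl
      intro i _
      by_cases h : X i p.1 ≤ p.2 <;> simp [h]
    rw [he]
    apply Finset.measurable_sum
    intro i _
    exact Measurable.ite
      (measurableSet_le ((hX i).comp measurable_fst) measurable_snd)
      measurable_const measurable_const
  have hN0 : ∀ ω t, 0 ≤ N ω t := fun ω t => by positivity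
  set h : Ω → ℝ → ℝ := fun ω t => max ((f ω : ℝ) - N ω t) 0 with hhdef
  have hhmeas : Measurable (Function.uncurry h) :=
    ((hfR.comp measurable_fst).sub hNmeas).max measurable_const
  have hh0 : ∀ ω t, 0 ≤ h ω t := fun ω t => le_max_right _ _
  have hhle : ∀ ω t, h ω t ≤ n := fun ω t =>
    max_le (by have := hfle ω; have := hN0 ω t; linarith) hnpos.le
  have hh_int : Integrable (Function.uncurry h) (μ.prod ν) := by
    apply Integrable.mono' (integrable_const (n:ℝ)) hhmeas.aestronglyMeasurable
    exact Filter.Eventually.of_forall fun p => by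
      show ‖h p.1 p.2‖ ≤ (n:ℝ)
      rw [Real.norm_eq_abs, abs_of_nonneg (hh0 _ _)]; exact hhle _ _
  -- a.e. all coordinates in [0,1]
  have hgood : ∀ᵐ ω ∂μ, ∀ i, X i ω ∈ Icc (0:ℝ) 1 := by
    rw [ae_all_iff]
    intro i
    have hs : MeasurableSet (X i ⁻¹' (Icc (0:ℝ) 1)) := (hX i) measurableSet_Icc
    have h1 : μ (X i ⁻¹' (Icc (0:ℝ) 1)) = 1 := by
      rw [← Measure.map_apply (hX i) measurableSet_Icc, hlaw i,
        Measure.restrict_apply measurableSet_Icc]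
      simp [Real.volume_Icc]
    have : μ (X i ⁻¹' (Icc (0:ℝ) 1))ᶜ = 0 := by
      rw [measure_compl hs (measure_ne_top _ _), h1, measure_univ]
      simp
    refine ae_iff.2 ?_
    have hset : {a | ¬ X i a ∈ Icc (0:ℝ) 1} = (X i ⁻¹' (Icc (0:ℝ) 1))ᶜ := rfl
    rw [hset]; exact this
  -- a.e. inner integral bound
  have hinner : ∀ᵐ ω ∂μ, ∫ t, h ω t ∂ν ≤ 1 := by
    refine hgood.mono fun ω hω => ?_
    exact key_det (fun i => X i ω) hω
  -- Fubini
  have hswap : ∫ t, ∫ ω, h ω t ∂μ ∂ν = ∫ ω, ∫ t, h ω t ∂ν ∂μ :=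
    (integral_integral_swap hh_int).symm
  have hright : ∫ ω, ∫ t, h ω t ∂ν ∂μ ≤ 1 := by
    have := integral_mono_of_nonneg
      (Filter.Eventually.of_forall fun ω =>
        integral_nonneg fun t => hh0 ω t)
      (integrable_const (1:ℝ)) hinner
    simpa using this
  -- pointwise-in-t lower bound
  have hlow : ∀ t ∈ Icc (0:ℝ) 1, max (m - n * t) 0 ≤ ∫ ω, h ω t ∂μ := by
    intro t ht
    have hNslice : Integrable (fun ω => N ω t) μ := by
      apply Integrable.mono' (integrable_const (n:ℝ))
        (hNmeas.comp (measurable_id.prodMk measurable_const)).aestronglyMeasurable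
      exact Filter.Eventually.of_forall fun ω => by
        show ‖N ω t‖ ≤ (n:ℝ)
        rw [Real.norm_eq_abs, abs_of_nonneg (hN0 ω t)]
        show ((Finset.univ.filter (fun i => X i ω ≤ t)).card : ℝ) ≤ (n:ℝ)
        have h1 : (Finset.univ.filter (fun i => X i ω ≤ t)).card
            ≤ (Finset.univ (α := Fin n)).card := Finset.card_filter_le _ _
        rw [Finset.card_univ, Fintype.card_fin] at h1
        exact_mod_cast h1
    have hhslice : Integrable (fun ω => h ω t) μ := by
      apply Integrable.mono' (integrable_const (n:ℝ))
        (hhmeas.comp (measurable_id.prodMk measurable_const)).aestronglyMeasurable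
      exact Filter.Eventually.of_forall fun ω => by
        show ‖h ω t‖ ≤ (n:ℝ)
        rw [Real.norm_eq_abs, abs_of_nonneg (hh0 _ _)]; exact hhle _ _
    apply max_le
    · have : ∫ ω, ((f ω : ℝ) - N ω t) ∂μ ≤ ∫ ω, h ω t ∂μ :=
        integral_mono (hf_int.sub hNslice) hhslice fun ω => le_max_left _ _
      rw [integral_sub hf_int hNslice] at this
      have hNint : ∫ ω, N ω t ∂μ = n * t := exp_count μ X hX hlaw ht
      rw [hNint] at this
      exact this
    · exact integral_nonneg fun ω => hh0 ω t
  have hleft : ∫ t, max (m - n * t) 0 ∂ν ≤ ∫ t, ∫ ω, h ω t ∂μ ∂ν := by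
    apply integral_mono_of_nonneg
      (Filter.Eventually.of_forall fun t => le_max_right _ _)
      hh_int.integral_prod_right
    rw [hν]
    exact (ae_restrict_mem measurableSet_Icc).mono hlow
  have hkey : ∫ t, max (m - n * t) 0 ∂ν ≤ 1 := by
    calc ∫ t, max (m - n * t) 0 ∂ν ≤ ∫ t, ∫ ω, h ω t ∂μ ∂ν := hleft
    _ = ∫ ω, ∫ t, h ω t ∂ν ∂μ := hswap
    _ ≤ 1 := hright
  -- compute the lower bound m^2/(2n)
  set c := m / n with hc
  have hc0 : 0 ≤ c := div_nonneg hm0 hnpos.le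
  have hc1 : c ≤ 1 := (div_le_one hnpos).2 hmn
  have hcont : Continuous fun t : ℝ => max (m - n * t) 0 :=
    (continuous_const.sub (continuous_const.mul continuous_id)).max continuous_const
  have hmono : ∫ t in Icc (0:ℝ) c, max (m - n * t) 0 ≤ ∫ t in Icc (0:ℝ) 1, max (m - n * t) 0 := by
    apply setIntegral_mono_set (hcont.integrableOn_Icc)
      (Filter.Eventually.of_forall fun t => le_max_right _ _)
    exact HasSubset.Subset.eventuallyLE (Icc_subset_Icc le_rfl hc1)
  have hlb : ∫ t in Icc (0:ℝ) c, (m - n * t) ≤ ∫ t in Icc (0:ℝ) c, max (m - n * t) 0 := by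
    apply integral_mono
      ((continuous_const.sub (continuous_const.mul continuous_id)).integrableOn_Icc)
      (hcont.integrableOn_Icc)
      fun t => le_max_left _ _
  have hcompute : ∫ t in Icc (0:ℝ) c, (m - n * t) = m * c - n * (c ^ 2 / 2) := by
    rw [integral_Icc_eq_integral_Ioc, ← intervalIntegral.integral_of_le hc0]
    rw [intervalIntegral.integral_sub intervalIntegrable_const
      ((intervalIntegral.intervalIntegrable_id).const_mul (n:ℝ))]
    rw [intervalIntegral.integral_const, intervalIntegral.integral_const_mul]
    have hid : ∫ x in (0:ℝ)..c, x = (c ^ 2 - 0 ^ 2) / 2 := by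
      open intervalIntegral in exact integral_id
    rw [hid]
    simp only [smul_eq_mul, sub_zero]
    ring
  have hfrac : m ^ 2 / (2 * n) ≤ 1 := by
    have he : m * c - n * (c ^ 2 / 2) = m ^ 2 / (2 * n) := by
      rw [hc]; field_simp; ring
    calc m ^ 2 / (2 * n) = m * c - n * (c ^ 2 / 2) := he.symm
    _ = ∫ t in Icc (0:ℝ) c, (m - n * t) := hcompute.symm
    _ ≤ ∫ t in Icc (0:ℝ) c, max (m - n * t) 0 := hlb
    _ ≤ ∫ t in Icc (0:ℝ) 1, max (m - n * t) 0 := hmono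
    _ ≤ 1 := hkey
  have h2n : (0:ℝ) < 2 * (n:ℝ) := by linarith
  have hsq : m ^ 2 ≤ 2 * (n:ℝ) := by
    have := (div_le_one h2n).mp hfrac
    linarith
  exact Real.le_sqrt_of_sq_le hsq
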